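/- For all a, b ≥ 0 with c ≥ a/e, one has Ξ(a, Θ(a,b)) = b and Θ(a, Ξ(a,c)) = c; i.e., for fixed a ≥ 0, Θ(a,·) is a bijection from [0,∞) to [a/e, ∞) with inverse Ξ(a,·) restricted to [a/e,∞). -/

import Mathlib

noncomputable def H (x : ℝ) : ℝ := x * Real.log x - x + 1

noncomputable def Theta (a b : ℝ) : ℝ :=
  if a = 0 then b / Real.exp 1
  else if b = 0 then a / Real.exp 1
  else if a = b then a
  else Real.exp ((b * Real.log b - a * Real.log a) / (b - a) - 1)

noncomputable def f (r : ℝ) : ℝ :=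
  if r = 0 then (Real.exp 1)⁻¹
  else if r = 1 then 1
  else Real.exp ((r * Real.log r - r + 1) / (r - 1))

noncomputable def g (s : ℝ) : ℝ :=
  if (Real.exp 1)⁻¹ < s then Function.invFunOn f (Set.Ici 0) s else 0

noncomputable def Xi (a c : ℝ) : ℝ :=
  if a = 0 then Real.exp 1 * c else a * g (c / a)

noncomputable def phi (r : ℝ) : ℝ := H r / (r - 1)
lemma H_one : H 1 = 0 := by simp [H]
lemma H_zero : H 0 = 1 := by simp [H]
lemma H_strictConvex : StrictConvexOn ℝ (Set.Ici 0) H := by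
  have h1 : StrictConvexOn ℝ (Set.Ici (0:ℝ)) fun x => x * Real.log x :=
    Real.strictConvexOn_mul_log
  have h2 : ConvexOn ℝ (Set.Ici (0:ℝ)) fun x : ℝ => 1 - x := by
    constructor
    · exact convex_Ici 0
    · intro x _ y _ a b _ _ hab
      simp only [smul_eq_mul]
      nlinarith
  have := h1.add_convexOn h2
  have hfun : H = fun x => x * Real.log x + (1 - x) := by
    funext x; simp [H]; ring
  rw [hfun]; exact this
lemma H_pos {x : ℝ} (hx : 0 ≤ x) (hx1 : x ≠ 1) : 0 < H x := by
  rcases eq_or_lt_of_le hx with rfl | hx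
  · rw [H_zero]; norm_num
  · have h := Real.log_lt_sub_one_of_pos (inv_pos.2 hx) (by
      simp only [ne_eq, inv_eq_one]; exact hx1)
    rw [Real.log_inv] at h
    have : x * (-Real.log x) < x * (x⁻¹ - 1) := by
      exact mul_lt_mul_of_pos_left h hx
    rw [mul_sub, mul_inv_cancel₀ (ne_of_gt hx)] at this
    simp only [H]; nlinarith
lemma phi_strictMono : StrictMonoOn phi (Set.Ici 0) := by
  intro x hx y hy hxy
  simp only [Set.mem_Ici] at hx hy
  rcases eq_or_ne x 1 with rfl | hx1
  · have : phi 1 = 0 := by simp [phi, H_one]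
    rw [this, phi]
    exact div_pos (H_pos hy (by linarith)) (by linarith)
  rcases eq_or_ne y 1 with rfl | hy1
  · have h1 : phi 1 = 0 := by simp [phi, H_one]
    rw [h1, phi]
    exact div_neg_of_pos_of_neg (H_pos hx hx1) (by linarith)
  · have := H_strictConvex.secant_strict_mono (a := 1) (by norm_num)
      (Set.mem_Ici.2 hx) (Set.mem_Ici.2 hy) hx1 hy1 hxy
    simpa [phi, H_one] using this
lemma f_eq_exp_phi {r : ℝ} : f r = Real.exp (phi r) := by
  rcases eq_or_ne r 0 with rfl | h0
  · simp [f, phi, H_zero, Real.exp_neg]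
  rcases eq_or_ne r 1 with rfl | h1
  · simp [f, phi, H_one]
  · simp [f, h0, h1, phi, H]
lemma H_continuous : Continuous H := by
  exact (Real.continuous_mul_log.sub continuous_id).add continuous_const
lemma H_hasDerivAt_one : HasDerivAt H 0 1 := by
  have h1 : HasDerivAt (fun x : ℝ => x * Real.log x) (Real.log 1 + 1) 1 :=
    Real.hasDerivAt_mul_log one_ne_zero
  have h2 := (h1.sub (hasDerivAt_id 1)).add_const 1
  have : H = fun x : ℝ => x * Real.log x - x + 1 := rfl
  rw [this]
  convert h2 using 1
  exacts [rfl, rfl, rfl, by simp]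
lemma phi_continuous : Continuous phi := by
  rw [continuous_iff_continuousAt]
  intro x
  rcases eq_or_ne x 1 with rfl | hx1
  · have h := H_hasDerivAt_one
    rw [hasDerivAt_iff_tendsto_slope] at h
    have hslope : ∀ y : ℝ, slope H 1 y = phi y := by
      intro y; simp [slope_def_field, phi, H_one]
    have h' : Filter.Tendsto phi (nhdsWithin 1 {(1:ℝ)}ᶜ) (nhds (phi 1)) := by
      have : phi 1 = 0 := by simp [phi, H_one]
      rw [this]
      exact h.congr (fun y => hslope y)
    unfold ContinuousAt
    rw [← nhdsNE_sup_pure]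
    exact h'.sup (tendsto_pure_nhds phi 1)
  · have : ContinuousAt (fun r => H r / (r - 1)) x := by
      exact (H_continuous.continuousAt).div
        ((continuous_id.sub continuous_const).continuousAt) (by simpa [sub_eq_zero] using hx1)
    exact this
lemma f_continuous : Continuous f := by
  have : Continuous fun r => Real.exp (phi r) := Real.continuous_exp.comp phi_continuous
  exact this.congr (fun r => f_eq_exp_phi.symm)
lemma phi_tendsto_atTop : Filter.Tendsto phi Filter.atTop Filter.atTop := by
  have hb : Filter.Tendsto (fun r : ℝ => Real.log r + (-1)) Filter.atTop Filter.atTop :=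
    Filter.tendsto_atTop_add_const_right _ (-1) Real.tendsto_log_atTop
  apply Filter.tendsto_atTop_mono' _ _ hb
  filter_upwards [Filter.eventually_ge_atTop (2:ℝ)] with r hr
  have hr1 : (1:ℝ) < r := by linarith
  have hlog : 0 ≤ Real.log r := Real.log_nonneg (by linarith)
  simp only [phi, H]
  rw [le_div_iff₀ (by linarith)]
  nlinarith
lemma f_tendsto_atTop : Filter.Tendsto f Filter.atTop Filter.atTop := by
  have := Real.tendsto_exp_atTop.comp phi_tendsto_atTop
  exact this.congr (fun r => f_eq_exp_phi.symm)
lemma f_strictMono : StrictMonoOn f (Set.Ici 0) := by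
  intro x hx y hy hxy
  rw [f_eq_exp_phi, f_eq_exp_phi]
  exact Real.exp_lt_exp.2 (phi_strictMono hx hy hxy)
lemma f_zero : f 0 = (Real.exp 1)⁻¹ := by simp [f]
lemma f_surj : Set.SurjOn f (Set.Ici 0) (Set.Ici (Real.exp 1)⁻¹) := by
  intro s hs
  simp only [Set.mem_Ici] at hs
  obtain ⟨M, hM⟩ := (f_tendsto_atTop.eventually_ge_atTop s).exists_forall_of_atTop
  have hM0 : (0:ℝ) ≤ max M 0 := le_max_right _ _
  have hsub : Set.Icc (f 0) (f (max M 0)) ⊆ f '' Set.Icc 0 (max M 0) :=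
    intermediate_value_Icc hM0 f_continuous.continuousOn
  have : s ∈ Set.Icc (f 0) (f (max M 0)) := by
    constructor
    · rw [f_zero]; exact hs
    · exact hM _ (le_max_left _ _)
  obtain ⟨r, hr, hfr⟩ := hsub this
  exact ⟨r, hr.1, hfr⟩
lemma f_gt {r : ℝ} (hr : 0 < r) : (Real.exp 1)⁻¹ < f r := by
  have := f_strictMono (Set.self_mem_Ici) (Set.mem_Ici.2 hr.le) hr
  rwa [f_zero] at this
lemma f_ge {r : ℝ} (hr : 0 ≤ r) : (Real.exp 1)⁻¹ ≤ f r := by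
  rcases eq_or_lt_of_le hr with rfl | hr
  · rw [f_zero]
  · exact (f_gt hr).le
lemma g_f {r : ℝ} (hr : 0 ≤ r) : g (f r) = r := by
  rcases eq_or_lt_of_le hr with rfl | hr
  · simp [g, f_zero]
  · rw [g, if_pos (f_gt hr)]
    exact f_strictMono.injOn (Function.invFunOn_apply_mem (Set.mem_Ici.2 hr.le))
      (Set.mem_Ici.2 hr.le) (Function.invFunOn_apply_eq (Set.mem_Ici.2 hr.le))
lemma g_exists {s : ℝ} (hs : (Real.exp 1)⁻¹ < s) : ∃ r ∈ Set.Ici (0:ℝ), f r = s :=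
  f_surj (Set.mem_Ici.2 hs.le)
lemma f_g {s : ℝ} (hs : (Real.exp 1)⁻¹ ≤ s) : f (g s) = s := by
  rcases eq_or_lt_of_le hs with rfl | hs
  · simp [g, f_zero]
  · rw [g, if_pos hs]
    exact Function.invFunOn_eq (g_exists hs)
lemma g_nonneg (s : ℝ) : 0 ≤ g s := by
  rw [g]
  split_ifs with h
  · exact Function.invFunOn_mem (g_exists h)
  · exact le_refl 0
lemma theta_scale {a b : ℝ} (ha : 0 < a) (hb : 0 ≤ b) :
    Theta a b = a * f (b / a) := by
  rcases eq_or_lt_of_le hb with rfl | hb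
  · simp [Theta, ha.ne', f_zero, div_eq_mul_inv]
  rcases eq_or_ne a b with rfl | hab
  · simp [Theta, ha.ne', hb.ne', f]
  · have hr0 : b / a ≠ 0 := div_ne_zero hb.ne' ha.ne'
    have hr1 : b / a ≠ 1 := by
      intro h
      rw [div_eq_one_iff_eq ha.ne'] at h
      exact hab h.symm
    have hba : b - a ≠ 0 := sub_ne_zero.2 (fun h => hab h.symm)
    have hra : b / a - 1 ≠ 0 := sub_ne_zero.2 hr1
    have key : (b * Real.log b - a * Real.log a) / (b - a) - 1 =
        Real.log a + (b / a * Real.log (b / a) - b / a + 1) / (b / a - 1) := by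
      rw [Real.log_div hb.ne' ha.ne']
      field_simp
      ring
    rw [Theta, if_neg ha.ne', if_neg hb.ne', if_neg hab, f, if_neg hr0, if_neg hr1,
      key, Real.exp_add, Real.exp_log ha]

/-- Invertibility: `Ξ(a, Θ(a,b)) = b`, `Θ(a, Ξ(a,c)) = c` for `c ≥ a/e`, and `Θ(a,·)`
is a bijection from `[0,∞)` onto `[a/e, ∞)`. -/
theorem theta_xi_inverse (a : ℝ) (ha : 0 ≤ a) :
    (∀ b : ℝ, 0 ≤ b → Xi a (Theta a b) = b) ∧
    (∀ c : ℝ, a / Real.exp 1 ≤ c → Theta a (Xi a c) = c) ∧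
    Set.BijOn (Theta a) (Set.Ici (0:ℝ)) (Set.Ici (a / Real.exp 1)) := by
  have e_pos : (0:ℝ) < Real.exp 1 := Real.exp_pos 1
  rcases eq_or_lt_of_le ha with rfl | ha0
  · have h1 : ∀ b : ℝ, 0 ≤ b → Xi 0 (Theta 0 b) = b := by
      intro b _
      simp only [Theta, Xi, if_pos rfl, ↓reduceIte]
      field_simp
    have h2 : ∀ c : ℝ, (0:ℝ) / Real.exp 1 ≤ c → Theta 0 (Xi 0 c) = c := by
      intro c _
      simp only [Theta, Xi, if_pos rfl, ↓reduceIte]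
      field_simp
    refine ⟨h1, h2, Set.InvOn.bijOn ⟨fun b hb => h1 b hb, fun c hc => h2 c hc⟩ ?_ ?_⟩
    · intro b hb
      simp only [Theta, if_pos rfl, Set.mem_Ici] at *
      rw [zero_div]
      exact div_nonneg hb e_pos.le
    · intro c hc
      simp only [Xi, if_pos rfl, Set.mem_Ici] at *
      rw [zero_div] at hc
      exact mul_nonneg e_pos.le hc
  · have h1 : ∀ b : ℝ, 0 ≤ b → Xi a (Theta a b) = b := by
      intro b hb
      rw [theta_scale ha0 hb, Xi, if_neg ha0.ne',
        mul_div_cancel_left₀ _ ha0.ne', g_f (div_nonneg hb ha0.le),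
        mul_div_cancel₀ _ ha0.ne']
    have h2 : ∀ c : ℝ, a / Real.exp 1 ≤ c → Theta a (Xi a c) = c := by
      intro c hc
      have hs : (Real.exp 1)⁻¹ ≤ c / a := by
        rw [le_div_iff₀ ha0]
        calc (Real.exp 1)⁻¹ * a = a / Real.exp 1 := by ring
        _ ≤ c := hc
      rw [Xi, if_neg ha0.ne', theta_scale ha0 (mul_nonneg ha0.le (g_nonneg _)),
        mul_div_cancel_left₀ _ ha0.ne', f_g hs, mul_div_cancel₀ _ ha0.ne']
    refine ⟨h1, h2, Set.InvOn.bijOn ⟨fun b hb => h1 b hb, fun c hc => h2 c hc⟩ ?_ ?_⟩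
    · intro b hb
      simp only [Set.mem_Ici] at *
      rw [theta_scale ha0 hb, div_eq_mul_inv]
      exact mul_le_mul_of_nonneg_left (f_ge (div_nonneg hb ha0.le)) ha
    · intro c hc
      simp only [Set.mem_Ici] at *
      rw [Xi, if_neg ha0.ne']
      exact mul_nonneg ha (g_nonneg _)
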